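/- arXiv:2102.12311 — 2 statements merged into one kernel-verified Lean document; each statement's English description precedes it below -/
import Mathlib

section
/- Let r ∈ ℝ^m and suppose {C(i)}_{i∈𝒮} cover {1,…,m}, with r_i := I_{C(i)} r and Λ_i as defined from Λ = ∑_i I_{C(i)}ᵀ I_{C(i)}. Then rᵀ r = ∑_{i∈𝒮} r_iᵀ Λ_i^{-1} r_i, i.e., the global squared Euclidean norm is the sum of locally computable overlap-weighted quadratic forms. -/
open Matrix Finset

/-- The selection matrix `I_C` whose rows are the standard unit row vectors `e_jᵀ` for `j ∈ C`. -/
noncomputable def sel {m : ℕ} (C : Finset (Fin m)) : Matrix {j // j ∈ C} (Fin m) ℝ :=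
  Matrix.of fun i j => if (i : Fin m) = j then 1 else 0

lemma sel_mulVec {m : ℕ} (C : Finset (Fin m)) (r : Fin m → ℝ) :
    (sel C).mulVec r = fun a : {j // j ∈ C} => r a := by
  funext a
  simp [sel, Matrix.mulVec, dotProduct]

lemma sum_selT_mul_sel {m N : ℕ} (C : Fin N → Finset (Fin m)) :
    (∑ i', (sel (C i'))ᵀ * sel (C i')) =
      Matrix.diagonal (fun j => ∑ i', if j ∈ C i' then (1:ℝ) else 0) := by
  ext j k
  simp only [Matrix.sum_apply, Matrix.mul_apply, Matrix.transpose_apply, sel, Matrix.of_apply,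
    Matrix.diagonal_apply]
  rcases eq_or_ne j k with rfl | h
  · simp only [if_pos rfl]
    refine Finset.sum_congr rfl fun i' _ => ?_
    rcases Finset.decidableMem j (C i') with hj | hj
    · rw [if_neg hj]
      apply Finset.sum_eq_zero
      intro a _
      rcases eq_or_ne (a : Fin m) j with ha | ha
      · exact absurd (ha ▸ a.2) hj
      · simp [ha]
    · rw [if_pos hj]
      rw [Finset.sum_eq_single (⟨j, hj⟩ : {x // x ∈ C i'})]
      · simp
      · intro b _ hb
        have : (b : Fin m) ≠ j := fun hbj => hb (Subtype.ext hbj)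
        simp [this]
      · simp
  · rw [if_neg h]
    apply Finset.sum_eq_zero
    intro i' _
    apply Finset.sum_eq_zero
    intro a _
    rcases eq_or_ne (a : Fin m) j with ha | ha
    · simp [ha, h]
    · simp [ha]

lemma sel_diag_selT {m : ℕ} (C : Finset (Fin m)) (d : Fin m → ℝ) :
    sel C * Matrix.diagonal d * (sel C)ᵀ =
      Matrix.diagonal (fun a : {j // j ∈ C} => d a) := by
  ext a b
  simp only [Matrix.mul_apply, Matrix.transpose_apply, sel, Matrix.of_apply,
    Matrix.diagonal_apply]
  rw [Finset.sum_eq_single (b : Fin m)]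
  · rw [if_pos rfl, mul_one]
    rw [Finset.sum_eq_single (a : Fin m)]
    · rcases eq_or_ne a b with rfl | h
      · simp
      · have : (a : Fin m) ≠ b := fun hab => h (Subtype.ext hab)
        simp [this, h]
    · intro k _ hk
      simp [Ne.symm hk]
    · simp
  · intro k _ hk
    simp [Ne.symm hk]
  · simp

/-- If the sets `C i` cover `{1,…,m}`, `r_i = I_{C i} r`, and `Λ_i = I_{C i} Λ I_{C i}ᵀ` with
`Λ = ∑ i, I_{C i}ᵀ I_{C i}`, then `rᵀ r = ∑ i, r_iᵀ Λ_i⁻¹ r_i`. -/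
theorem stmt8 {m N : ℕ} (C : Fin N → Finset (Fin m))
    (hcover : ∀ j : Fin m, ∃ i, j ∈ C i) (r : Fin m → ℝ) :
    r ⬝ᵥ r =
      ∑ i, (sel (C i)).mulVec r ⬝ᵥ
        ((sel (C i) * (∑ i', (sel (C i'))ᵀ * sel (C i')) * (sel (C i))ᵀ)⁻¹).mulVec
          ((sel (C i)).mulVec r) := by
  set d : Fin m → ℝ := fun j => ∑ i', if j ∈ C i' then (1:ℝ) else 0 with hd
  have hdpos : ∀ j, 0 < d j := by
    intro j
    obtain ⟨i, hi⟩ := hcover j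
    exact Finset.sum_pos' (fun i' _ => by positivity)
      ⟨i, Finset.mem_univ i, by simp [hi]⟩
  have key : ∀ i, (sel (C i)).mulVec r ⬝ᵥ
        ((sel (C i) * (∑ i', (sel (C i'))ᵀ * sel (C i')) * (sel (C i))ᵀ)⁻¹).mulVec
          ((sel (C i)).mulVec r)
      = ∑ a : {j // j ∈ C i}, (d a)⁻¹ * (r a * r a) := by
    intro i
    have hinv : (Matrix.diagonal (fun a : {j // j ∈ C i} => d a))⁻¹
        = Matrix.diagonal (fun a : {j // j ∈ C i} => (d a)⁻¹) := by
      apply Matrix.inv_eq_right_inv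
      rw [Matrix.diagonal_mul_diagonal]
      have : (fun a : {j // j ∈ C i} => d a * (d a)⁻¹) = fun _ => (1:ℝ) := by
        funext a; exact mul_inv_cancel₀ (hdpos _).ne'
      rw [this, Matrix.diagonal_one]
    rw [sum_selT_mul_sel, ← hd, sel_diag_selT, hinv, sel_mulVec]
    simp only [dotProduct, Matrix.mulVec_diagonal]
    refine Finset.sum_congr rfl fun a _ => ?_
    ring
  rw [Finset.sum_congr rfl fun i _ => key i]
  have hsub : ∀ i : Fin N, (∑ a : {j // j ∈ C i}, (d a)⁻¹ * (r a * r a))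
      = ∑ j : Fin m, if j ∈ C i then (d j)⁻¹ * (r j * r j) else 0 := by
    intro i
    rw [Finset.sum_coe_sort (C i) (fun j => (d j)⁻¹ * (r j * r j))]
    rw [Finset.sum_ite_mem, Finset.univ_inter]
  rw [Finset.sum_congr rfl fun i _ => hsub i, Finset.sum_comm]
  unfold dotProduct
  refine Finset.sum_congr rfl fun j _ => ?_
  have : ∑ i : Fin N, (if j ∈ C i then (d j)⁻¹ * (r j * r j) else 0)
      = (∑ i : Fin N, if j ∈ C i then (1:ℝ) else 0) * ((d j)⁻¹ * (r j * r j)) := by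
    rw [Finset.sum_mul]
    refine Finset.sum_congr rfl fun i _ => ?_
    split <;> simp
  have hdj : (∑ i : Fin N, if j ∈ C i then (1:ℝ) else 0) = d j := rfl
  rw [this, hdj]
  have hne : d j ≠ 0 := (hdpos j).ne'
  field_simp
end

section
/- Let S = Sᵀ ⪰ 0, s ∈ range(S), and let λ̄* be the CG limit with S λ̄* = s and P_N λ̄* = P_N λ̄⁰ (P_N = projection onto null(S)). Then the CG iterates satisfy ‖λ̄^{n} − λ̄*‖_S² ≤ 2 ((√κ − 1)/(√κ + 1))^{n} ‖λ̄⁰ − λ̄*‖_S², where κ = ω_max/ω_min is the ratio of largest to smallest nonzero eigenvalue of S and ‖x‖_S² = xᵀ S x. -/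
open Matrix

section AuxCG

open Polynomial

lemma cheb_eval_half (u : ℝ) (hu : u ≠ 0) :
    ∀ n : ℕ, (Chebyshev.T ℝ n).eval ((u + u⁻¹)/2) = (u^n + (u⁻¹)^n)/2 := by
  have key : ∀ n : ℕ, (Chebyshev.T ℝ n).eval ((u + u⁻¹)/2) = (u^n + (u⁻¹)^n)/2 ∧
      (Chebyshev.T ℝ (n+1)).eval ((u + u⁻¹)/2) = (u^(n+1) + (u⁻¹)^(n+1))/2 := by
    intro n
    induction n with
    | zero => simp [Polynomial.Chebyshev.T_one]
    | succ k ih =>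
      refine ⟨ih.2, ?_⟩
      rw [show (((k+1:ℕ)):ℤ) + 1 = (k:ℤ) + 2 by push_cast; ring]
      rw [Polynomial.Chebyshev.T_add_two]
      have h1 := ih.1
      have h2 := ih.2
      simp only [eval_sub, eval_mul, eval_X, eval_ofNat] at *
      rw [show ((k:ℕ)+1 : ℤ) = (k:ℤ)+1 by norm_cast] at h2
      rw [h1, h2]
      have hii : u * u⁻¹ = 1 := mul_inv_cancel₀ hu
      field_simp
      linear_combination (u * u⁻¹ ^ k - u⁻¹ * u⁻¹ ^ k) * hii
  intro n; exact (key n).1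

lemma cheb_abs_le (y : ℝ) (hy : |y| ≤ 1) (n : ℕ) : |(Chebyshev.T ℝ n).eval y| ≤ 1 := by
  have h1 : -1 ≤ y := neg_le_of_abs_le hy
  have h2 : y ≤ 1 := le_of_abs_le hy
  have : y = Real.cos (Real.arccos y) := (Real.cos_arccos h1 h2).symm
  rw [this, Polynomial.Chebyshev.T_real_cos]
  exact Real.abs_cos_le_one _

lemma cheb_natDegree_le : ∀ n : ℕ, (Chebyshev.T ℝ n).natDegree ≤ n := by
  have key : ∀ n : ℕ, (Chebyshev.T ℝ n).natDegree ≤ n ∧ (Chebyshev.T ℝ (n+1)).natDegree ≤ n+1 := by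
    intro n
    induction n with
    | zero => simp [Polynomial.Chebyshev.T_one]
    | succ k ih =>
      refine ⟨ih.2, ?_⟩
      rw [show (((k+1:ℕ)):ℤ) + 1 = (k:ℤ) + 2 by push_cast; ring]
      rw [Polynomial.Chebyshev.T_add_two]
      refine le_trans (natDegree_sub_le _ _) ?_
      have hX : (2 * X * Chebyshev.T ℝ ((k:ℤ)+1)).natDegree ≤ k + 2 := by
        refine le_trans (natDegree_mul_le) ?_
        have : (2 * X : ℝ[X]).natDegree ≤ 1 := le_trans natDegree_mul_le (by simp)
        have h2 := ih.2
        rw [show ((k:ℕ)+1 : ℤ) = (k:ℤ)+1 by norm_cast] at h2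
        omega
      have hk := ih.1
      simp only [max_le_iff]
      exact ⟨hX, by omega⟩
  intro n; exact (key n).1

variable {m : ℕ}

lemma mySumMulVec {ι : Type*} (s : Finset ι) (f : ι → Matrix (Fin m) (Fin m) ℝ)
    (v : Fin m → ℝ) : (∑ j ∈ s, f j) *ᵥ v = ∑ j ∈ s, f j *ᵥ v := by
  induction s using Finset.cons_induction with
  | empty => simp [Matrix.zero_mulVec]
  | cons a s ha ih => simp only [Finset.sum_cons, Matrix.add_mulVec, ih]

lemma myConjPow (U D : Matrix (Fin m) (Fin m) ℝ) (hUU : star U * U = 1)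
    (hUU' : U * star U = 1) (n : ℕ) : (U * D * star U) ^ n = U * D ^ n * star U := by
  induction n with
  | zero => simpa using hUU'.symm
  | succ k ih =>
    rw [pow_succ, ih, pow_succ]
    calc U * D ^ k * star U * (U * D * star U)
        = U * D ^ k * (star U * U) * D * star U := by noncomm_ring
      _ = U * (D ^ k * D) * star U := by rw [hUU]; noncomm_ring

lemma myConjAeval (U : Matrix (Fin m) (Fin m) ℝ) (w : Fin m → ℝ) (hUU : star U * U = 1)
    (hUU' : U * star U = 1) (q : ℝ[X]) :
    Polynomial.aeval (U * Matrix.diagonal w * star U) q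
      = U * Matrix.diagonal (fun i => q.eval (w i)) * star U := by
  induction q using Polynomial.induction_on' with
  | add p q hp hq =>
    rw [map_add, hp, hq]
    simp only [Polynomial.eval_add]
    rw [show (Matrix.diagonal fun i => p.eval (w i) + q.eval (w i))
      = Matrix.diagonal (fun i => p.eval (w i)) + Matrix.diagonal (fun i => q.eval (w i)) from by
        rw [Matrix.diagonal_add]]
    noncomm_ring
  | monomial n a =>
    rw [Polynomial.aeval_monomial, myConjPow U _ hUU hUU', Matrix.diagonal_pow,
      Algebra.algebraMap_eq_smul_one, smul_mul_assoc, one_mul]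
    have : (Matrix.diagonal fun i => eval (w i) ((monomial n) a))
        = a • Matrix.diagonal (w ^ n) := by
      ext i j
      by_cases h : i = j <;>
        simp [Matrix.diagonal_apply, h, Polynomial.eval_monomial, Pi.pow_apply]
    rw [this, Matrix.mul_smul, Matrix.smul_mul]

lemma myMulVecDot (U : Matrix (Fin m) (Fin m) ℝ) (hUU : star U * U = 1) (a b : Fin m → ℝ) :
    (U *ᵥ a) ⬝ᵥ (U *ᵥ b) = a ⬝ᵥ b := by
  rw [Matrix.dotProduct_mulVec, ← Matrix.mulVec_transpose,
    show Uᵀ = star U from by rw [Matrix.star_eq_conjTranspose,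
      Matrix.conjTranspose_eq_transpose_of_trivial],
    Matrix.mulVec_mulVec, hUU, Matrix.one_mulVec]

lemma myQuadEval (U : Matrix (Fin m) (Fin m) ℝ) (w : Fin m → ℝ) (hUU : star U * U = 1)
    (hUU' : U * star U = 1) (q : ℝ[X]) (x : Fin m → ℝ) :
    ((Polynomial.aeval (U * Matrix.diagonal w * star U) q) *ᵥ x) ⬝ᵥ
      (U * Matrix.diagonal w * star U) *ᵥ ((Polynomial.aeval (U * Matrix.diagonal w * star U) q) *ᵥ x)
      = ∑ i, w i * (q.eval (w i))^2 * ((star U *ᵥ x) i)^2 := by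
  rw [myConjAeval U w hUU hUU' q]
  set v := star U *ᵥ x with hv
  have h1 : ((U * Matrix.diagonal fun i => q.eval (w i)) * star U) *ᵥ x
      = U *ᵥ ((Matrix.diagonal fun i => q.eval (w i)) *ᵥ v) := by
    rw [← Matrix.mulVec_mulVec, ← Matrix.mulVec_mulVec]
  have h2 : (U * Matrix.diagonal w * star U) *ᵥ (U *ᵥ ((Matrix.diagonal fun i => q.eval (w i)) *ᵥ v))
      = U *ᵥ (Matrix.diagonal w *ᵥ ((Matrix.diagonal fun i => q.eval (w i)) *ᵥ v)) := by
    rw [Matrix.mulVec_mulVec, show U * Matrix.diagonal w * star U * U = U * Matrix.diagonal w from by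
      rw [mul_assoc, mul_assoc, hUU, mul_one], ← Matrix.mulVec_mulVec]
  rw [show (U * Matrix.diagonal fun i => eval (w i) q) * star U
      = U * (Matrix.diagonal fun i => eval (w i) q) * star U from by rw [mul_assoc]] at h1
  rw [h1, h2, myMulVecDot U hUU]
  simp only [Matrix.mulVec_diagonal, dotProduct]
  congr 1; funext i; ring

lemma mySpecBound (S U : Matrix (Fin m) (Fin m) ℝ) (w : Fin m → ℝ)
    (hUU : star U * U = 1) (hUU' : U * star U = 1)
    (hspec : S = U * Matrix.diagonal w * star U) (q : ℝ[X]) (x : Fin m → ℝ) (M : ℝ)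
    (hM : ∀ i, w i * (q.eval (w i))^2 ≤ M * w i) :
    ((Polynomial.aeval S q) *ᵥ x) ⬝ᵥ S *ᵥ ((Polynomial.aeval S q) *ᵥ x)
      ≤ M * (x ⬝ᵥ S *ᵥ x) := by
  subst hspec
  have hq := myQuadEval U w hUU hUU' q x
  have h1 := myQuadEval U w hUU hUU' (1 : ℝ[X]) x
  simp only [_root_.map_one, Matrix.one_mulVec, Polynomial.eval_one, one_pow, mul_one] at h1
  rw [hq, h1, Finset.mul_sum]
  refine Finset.sum_le_sum fun i _ => ?_
  have h2 : ((star U *ᵥ x) i)^2 ≥ 0 := sq_nonneg _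
  calc w i * (q.eval (w i))^2 * ((star U *ᵥ x) i)^2
      ≤ (M * w i) * ((star U *ᵥ x) i)^2 := by nlinarith [hM i]
    _ = M * (w i * ((star U *ᵥ x) i)^2) := by ring

end AuxCG

set_option maxHeartbeats 1000000 in
/-- CG convergence-rate estimate for semidefinite systems: with `S = Sᵀ ⪰ 0`, `range S ≠ {0}`,
`s ∈ range S`, and `λ̄*` the CG limit satisfying `S λ̄* = s` and `P_N λ̄* = P_N λ̄⁰`, the iterates
satisfy `‖λ̄^n − λ̄*‖_S² ≤ 2 ((√κ−1)/(√κ+1))^n ‖λ̄⁰ − λ̄*‖_S²`, where `κ = ω_max/ω_min` is the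
ratio of the largest and smallest nonzero eigenvalues of `S`. -/
theorem stmt13 {m : ℕ} (S : Matrix (Fin m) (Fin m) ℝ) (hpsd : S.PosSemidef)
    (hS : S.IsHermitian) (hS0 : S ≠ 0) (s : Fin m → ℝ) (hs : ∃ z, S.mulVec z = s)
    (lam r p : ℕ → Fin m → ℝ) (α β : ℕ → ℝ)
    (hr0 : r 0 = s - S.mulVec (lam 0)) (hp0 : p 0 = r 0)
    (hα : ∀ k, r k ≠ 0 → α k = (r k ⬝ᵥ r k) / (p k ⬝ᵥ S.mulVec (p k)))
    (hlam : ∀ k, r k ≠ 0 → lam (k + 1) = lam k + α k • p k)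
    (hlam' : ∀ k, r k = 0 → lam (k + 1) = lam k)
    (hr : ∀ k, r k ≠ 0 → r (k + 1) = r k - α k • S.mulVec (p k))
    (hr' : ∀ k, r k = 0 → r (k + 1) = r k)
    (hβ : ∀ k, r k ≠ 0 → β k = (r (k + 1) ⬝ᵥ r (k + 1)) / (r k ⬝ᵥ r k))
    (hp : ∀ k, r k ≠ 0 → p (k + 1) = r (k + 1) + β k • p k)
    (lamstar : Fin m → ℝ) (hstar : S.mulVec lamstar = s)
    (hstarN : ∀ v : Fin m → ℝ, S.mulVec v = 0 → lamstar ⬝ᵥ v = lam 0 ⬝ᵥ v)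
    (ωmax ωmin : ℝ)
    (hmax : IsGreatest {x : ℝ | x ≠ 0 ∧ ∃ i, hS.eigenvalues i = x} ωmax)
    (hmin : IsLeast {x : ℝ | x ≠ 0 ∧ ∃ i, hS.eigenvalues i = x} ωmin) :
    ∀ n : ℕ,
      (lam n - lamstar) ⬝ᵥ S.mulVec (lam n - lamstar) ≤
        2 * ((Real.sqrt (ωmax / ωmin) - 1) / (Real.sqrt (ωmax / ωmin) + 1)) ^ n *
          ((lam 0 - lamstar) ⬝ᵥ S.mulVec (lam 0 - lamstar)) := by
  classical
  intro n
  -- basic facts about S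
  have hsymm : ∀ x y : Fin m → ℝ, x ⬝ᵥ S *ᵥ y = y ⬝ᵥ S *ᵥ x := by
    intro x y
    rw [Matrix.dotProduct_mulVec, ← Matrix.mulVec_transpose]
    rw [show Sᵀ = S from ?_]
    · exact dotProduct_comm _ _
    · rw [← Matrix.conjTranspose_eq_transpose_of_trivial]; exact hS
  have hpos : ∀ x : Fin m → ℝ, 0 ≤ x ⬝ᵥ S *ᵥ x := by
    intro x
    have := hpsd.dotProduct_mulVec_nonneg x
    simpa using this
  have hker : ∀ x : Fin m → ℝ, x ⬝ᵥ S *ᵥ x = 0 → S *ᵥ x = 0 := by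
    intro x hx
    exact (hpsd.dotProduct_mulVec_zero_iff x).mp (by simpa using hx)
  have hdotpos : ∀ v : Fin m → ℝ, v ≠ 0 → 0 < v ⬝ᵥ v := by
    intro v hv
    have h1 : 0 ≤ v ⬝ᵥ v := Finset.sum_nonneg fun i _ => mul_self_nonneg _
    rcases h1.lt_or_eq with h | h
    · exact h
    · exact absurd (dotProduct_self_eq_zero.mp h.symm) hv
  -- residual identity
  have hre : ∀ k, r k = -(S *ᵥ (lam k - lamstar)) := by
    intro k
    induction k with
    | zero =>
      rw [hr0, ← hstar, Matrix.mulVec_sub]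
      abel
    | succ k ih =>
      by_cases hk : r k = 0
      · rw [hr' k hk, hlam' k hk, ih]
      · rw [hr k hk, hlam k hk, ih,
          show lam k + α k • p k - lamstar = (lam k - lamstar) + α k • p k from by abel,
          Matrix.mulVec_add, Matrix.mulVec_smul]
        abel
  -- eigenvalue facts
  have ha_pos : 0 < ωmin := by
    obtain ⟨hne, i, hi⟩ := hmin.1
    have := hpsd.eigenvalues_nonneg i
    rw [hi] at this
    exact lt_of_le_of_ne this (Ne.symm hne)
  have hab : ωmin ≤ ωmax := hmax.2 hmin.1
  have hκ1 : 1 ≤ ωmax / ωmin := (one_le_div ha_pos).mpr hab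
  have ht1 : 1 ≤ Real.sqrt (ωmax / ωmin) := by
    rw [show (1:ℝ) = Real.sqrt 1 from (Real.sqrt_one).symm]
    exact Real.sqrt_le_sqrt hκ1
  set qv : ℝ := (Real.sqrt (ωmax / ωmin) - 1) / (Real.sqrt (ωmax / ωmin) + 1) with hqvdef
  have hqv0 : 0 ≤ qv := div_nonneg (by linarith) (by linarith)
  have hB : 0 ≤ (lam 0 - lamstar) ⬝ᵥ S *ᵥ (lam 0 - lamstar) := hpos _
  have hRHS0 : 0 ≤ 2 * qv ^ n * ((lam 0 - lamstar) ⬝ᵥ S *ᵥ (lam 0 - lamstar)) := by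
    have := pow_nonneg hqv0 n
    positivity
  -- n = 0 case
  rcases Nat.eq_zero_or_pos n with hn0 | hn1
  · subst hn0
    simp only [pow_zero, mul_one]
    have := hpos (lam 0 - lamstar)
    linarith
  -- breakdown case
  by_cases hbrk : ∃ j, j < n ∧ r j = 0
  · have hzero : ∀ k, (∃ j, j ≤ k ∧ r j = 0) → r k = 0 := by
      intro k
      induction k with
      | zero => rintro ⟨j, hj, h0⟩; rwa [Nat.le_zero.mp hj] at h0
      | succ k ih =>
        rintro ⟨j, hj, h0⟩
        rcases Nat.le_succ_iff.mp hj with hjk | rfl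
        · have hk := ih ⟨j, hjk, h0⟩
          rw [hr' k hk]; exact hk
        · exact h0
    obtain ⟨j, hj, h0⟩ := hbrk
    have hrn : r n = 0 := hzero n ⟨j, le_of_lt hj, h0⟩
    have hSn : S *ᵥ (lam n - lamstar) = 0 := by
      have h := hre n
      rw [hrn] at h
      exact neg_eq_zero.mp h.symm
    rw [show S.mulVec (lam n - lamstar) = S *ᵥ (lam n - lamstar) from rfl, hSn,
      dotProduct_zero]
    exact hRHS0
  push_neg at hbrk
  have hnb : ∀ j, j < n → r j ≠ 0 := fun j hj => hbrk j hj
  -- positivity helpers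
  have hrrpos : ∀ i, i < n → 0 < r i ⬝ᵥ r i := fun i hi => hdotpos _ (hnb i hi)
  have hrange : ∀ k, k ≤ n → ∃ y, S *ᵥ y = p k := by
    intro k
    induction k with
    | zero =>
      intro _
      exact ⟨-(lam 0 - lamstar), by rw [Matrix.mulVec_neg, ← hre 0, hp0]⟩
    | succ k ih =>
      intro hk
      obtain ⟨y, hy⟩ := ih (by omega)
      refine ⟨-(lam (k+1) - lamstar) + β k • y, ?_⟩
      rw [hp k (hnb k (by omega)), Matrix.mulVec_add, Matrix.mulVec_smul, hy,
        Matrix.mulVec_neg, ← hre (k+1)]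
  have posPSP : ∀ i, i < n → (r i ⬝ᵥ p i = r i ⬝ᵥ r i) → 0 < p i ⬝ᵥ S *ᵥ p i := by
    intro i hi hc
    have hpne : p i ≠ 0 := by
      intro h
      rw [h, dotProduct_zero] at hc
      exact absurd hc.symm (ne_of_gt (hrrpos i hi))
    rcases (hpos (p i)).lt_or_eq with h | h
    · exact h
    · exfalso
      have hS0' : S *ᵥ p i = 0 := hker _ h.symm
      obtain ⟨y, hy⟩ := hrange i (le_of_lt hi)
      have hzero : p i ⬝ᵥ p i = 0 := by
        have h9 : p i ⬝ᵥ p i = y ⬝ᵥ (S *ᵥ p i) := by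
          nth_rewrite 1 [← hy]
          rw [dotProduct_comm]
          exact hsymm _ _
        rw [h9, hS0', dotProduct_zero]
      exact hpne (dotProduct_self_eq_zero.mp hzero)
  have hαpos : ∀ i, i < n → (r i ⬝ᵥ p i = r i ⬝ᵥ r i) → 0 < α i := by
    intro i hi hc
    rw [hα i (hnb i hi)]
    exact div_pos (hrrpos i hi) (posPSP i hi hc)
  -- CG orthogonality invariants
  have phi : ∀ k, k ≤ n →
      (r k ⬝ᵥ p k = r k ⬝ᵥ r k) ∧
      (∀ i, i < k → r k ⬝ᵥ r i = 0) ∧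
      (∀ i, i < k → r k ⬝ᵥ p i = 0) ∧
      (∀ i, i < k → p k ⬝ᵥ S *ᵥ p i = 0) := by
    intro k
    induction k using Nat.strong_induction_on with
    | _ k IH =>
      rcases k with _ | k
      · intro _
        exact ⟨by rw [hp0], fun i hi => absurd hi (Nat.not_lt_zero i),
          fun i hi => absurd hi (Nat.not_lt_zero i), fun i hi => absurd hi (Nat.not_lt_zero i)⟩
      · intro hk1
        have hkn : k < n := by omega
        obtain ⟨hc, hA, hD, hBc⟩ := IH k (by omega) (by omega)
        have rknz := hnb k hkn
        have rrk : 0 < r k ⬝ᵥ r k := hrrpos k hkn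
        have psp : 0 < p k ⬝ᵥ S *ᵥ p k := posPSP k hkn hc
        have hαk := hα k rknz
        have hαkpos : 0 < α k := hαpos k hkn hc
        have hαψ : α k * (p k ⬝ᵥ S *ᵥ p k) = r k ⬝ᵥ r k := by
          rw [hαk]; field_simp
        have hrk1 := hr k rknz
        have hd1 : r (k+1) ⬝ᵥ p k = 0 := by
          rw [hrk1, sub_dotProduct, smul_dotProduct,
            show (S *ᵥ p k) ⬝ᵥ p k = p k ⬝ᵥ (S *ᵥ p k) from dotProduct_comm _ _, hc]
          simp only [smul_eq_mul]
          linarith [hαψ]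
        have hdnew : ∀ i, i < k+1 → r (k+1) ⬝ᵥ p i = 0 := by
          intro i hi
          rcases Nat.lt_succ_iff_lt_or_eq.mp hi with hik | heq
          · rw [hrk1, sub_dotProduct, smul_dotProduct,
              show (S *ᵥ p k) ⬝ᵥ p i = p i ⬝ᵥ (S *ᵥ p k) from dotProduct_comm _ _,
              hsymm (p i) (p k), hD i hik, hBc i hik]
            simp
          · rw [heq]; exact hd1
        have hanew : ∀ i, i < k+1 → r (k+1) ⬝ᵥ r i = 0 := by
          intro i
          rcases i with _ | j
          · intro hi
            have h := hdnew 0 hi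
            rwa [hp0] at h
          · intro hi
            have hjn : j < n := by omega
            have hrj : r (j+1) = p (j+1) - β j • p j := by
              rw [hp j (hnb j hjn)]; abel
            rw [hrj, dotProduct_sub, dotProduct_smul,
              hdnew (j+1) hi, hdnew j (by omega)]
            simp
        have hβk := hβ k rknz
        have hpk1 := hp k rknz
        have hcnew : r (k+1) ⬝ᵥ p (k+1) = r (k+1) ⬝ᵥ r (k+1) := by
          rw [hpk1, dotProduct_add, dotProduct_smul, hd1]
          simp
        have hbnew : ∀ i, i < k+1 → p (k+1) ⬝ᵥ S *ᵥ p i = 0 := by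
          intro i hi
          rcases Nat.lt_succ_iff_lt_or_eq.mp hi with hik | heq
          · obtain ⟨hci, -, -, -⟩ := IH i (by omega) (by omega)
            have hαi : 0 < α i := hαpos i (by omega) hci
            have hri1 := hr i (hnb i (by omega))
            have h5 : α i * (r (k+1) ⬝ᵥ (S *ᵥ p i)) = 0 := by
              have h6 : α i • (S *ᵥ p i) = r i - r (i+1) := by rw [hri1]; abel
              have h7 : r (k+1) ⬝ᵥ (α i • (S *ᵥ p i)) = 0 := by
                rw [h6, dotProduct_sub, hanew i (by omega), hanew (i+1) (by omega),
                  sub_zero]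
              rw [dotProduct_smul] at h7
              simpa using h7
            have h6 : r (k+1) ⬝ᵥ (S *ᵥ p i) = 0 := by
              rcases mul_eq_zero.mp h5 with h | h
              · exact absurd h (ne_of_gt hαi)
              · exact h
            rw [hpk1, add_dotProduct, smul_dotProduct, h6, hBc i hik]
            simp
          · rw [heq]
            have h7 : α k * (r (k+1) ⬝ᵥ (S *ᵥ p k)) = -(r (k+1) ⬝ᵥ r (k+1)) := by
              have h6 : α k • (S *ᵥ p k) = r k - r (k+1) := by rw [hrk1]; abel
              have h8 : r (k+1) ⬝ᵥ (α k • (S *ᵥ p k)) = -(r (k+1) ⬝ᵥ r (k+1)) := by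
                rw [h6, dotProduct_sub, hanew k (by omega)]
                ring
              rw [dotProduct_smul] at h8
              simpa using h8
            have hAval : r (k+1) ⬝ᵥ (S *ᵥ p k) = -(r (k+1) ⬝ᵥ r (k+1)) / α k := by
              rw [eq_div_iff (ne_of_gt hαkpos)]
              linarith [h7]
            rw [hpk1, add_dotProduct, smul_dotProduct, hAval, hβk, hαk]
            field_simp
            rw [smul_eq_mul, div_mul_eq_mul_div, mul_div_assoc', mul_div_cancel_left₀ _ (ne_of_gt rrk)]
            ring
        exact ⟨hcnew, hanew, hdnew, hbnew⟩
  -- Krylov subspace spanned by the search directions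
  set Pn : Submodule ℝ (Fin m → ℝ) := Submodule.span ℝ {v | ∃ i, i < n ∧ v = p i} with hPndef
  have hgen : ∀ i, i < n → p i ∈ Pn := fun i hi => Submodule.subset_span ⟨i, hi, rfl⟩
  have hsub : ∀ j : ℕ, ∀ i, i ≤ j → p i ∈ Submodule.span ℝ {v | ∃ i, i ≤ j ∧ v = p i} :=
    fun j i hi => Submodule.subset_span ⟨i, hi, rfl⟩
  have hmono : ∀ j j' : ℕ, j ≤ j' →
      Submodule.span ℝ {v | ∃ i, i ≤ j ∧ v = p i}
        ≤ Submodule.span ℝ {v | ∃ i, i ≤ j' ∧ v = p i} := by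
    intro j j' hjj
    refine Submodule.span_mono ?_
    rintro v ⟨i, hi, hv⟩
    exact ⟨i, le_trans hi hjj, hv⟩
  have hrsub : ∀ j, j < n → r j ∈ Submodule.span ℝ {v | ∃ i, i ≤ j ∧ v = p i} := by
    intro j
    induction j with
    | zero => intro _; rw [← hp0]; exact hsub 0 0 le_rfl
    | succ j ih =>
      intro hj
      have hrj : r (j+1) = p (j+1) - β j • p j := by rw [hp j (hnb j (by omega))]; abel
      rw [hrj]
      exact Submodule.sub_mem _ (hsub (j+1) (j+1) le_rfl)
        (Submodule.smul_mem _ _ (hsub (j+1) j (by omega)))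
  have hQsub : ∀ j, j < n → (S ^ j) *ᵥ (r 0) ∈ Submodule.span ℝ {v | ∃ i, i ≤ j ∧ v = p i} := by
    intro j
    induction j with
    | zero => intro _; rw [pow_zero, Matrix.one_mulVec, ← hp0]; exact hsub 0 0 le_rfl
    | succ j ih =>
      intro hj
      have hmem := ih (by omega)
      have hstep : ∀ v ∈ Submodule.span ℝ {v | ∃ i, i ≤ j ∧ v = p i},
          S *ᵥ v ∈ Submodule.span ℝ {v | ∃ i, i ≤ j+1 ∧ v = p i} := by
        intro v hv
        induction hv using Submodule.span_induction with
        | mem x hx =>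
          obtain ⟨i, hij, rfl⟩ := hx
          obtain ⟨hci, -, -, -⟩ := phi i (by omega)
          have hαi : 0 < α i := hαpos i (by omega) hci
          have hri1 := hr i (hnb i (by omega))
          have h6 : S *ᵥ p i = (α i)⁻¹ • (r i - r (i+1)) := by
            rw [hri1, show r i - (r i - α i • S *ᵥ p i) = α i • (S *ᵥ p i) from by abel,
              smul_smul, inv_mul_cancel₀ (ne_of_gt hαi), one_smul]
          rw [h6]
          refine Submodule.smul_mem _ _ (Submodule.sub_mem _ ?_ ?_)
          · exact hmono i (j+1) (by omega) (hrsub i (by omega))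
          · exact hmono (i+1) (j+1) (by omega) (hrsub (i+1) (by omega))
        | zero => rw [Matrix.mulVec_zero]; exact Submodule.zero_mem _
        | add x y hx hy ihx ihy => rw [Matrix.mulVec_add]; exact Submodule.add_mem _ ihx ihy
        | smul a x hx ihx => rw [Matrix.mulVec_smul]; exact Submodule.smul_mem _ _ ihx
      rw [pow_succ', ← Matrix.mulVec_mulVec]
      exact hstep _ hmem
  have hQP : ∀ j, j < n → (S ^ j) *ᵥ (r 0) ∈ Pn := by
    intro j hj
    refine Submodule.span_mono ?_ (hQsub j hj)
    rintro v ⟨i, hi, hv⟩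
    exact ⟨i, by omega, hv⟩
  have hlamP : ∀ k, k ≤ n → lam k - lam 0 ∈ Pn := by
    intro k
    induction k with
    | zero => intro _; rw [sub_self]; exact Submodule.zero_mem _
    | succ k ih =>
      intro hk
      rw [hlam k (hnb k (by omega)),
        show lam k + α k • p k - lam 0 = (lam k - lam 0) + α k • p k from by abel]
      exact Submodule.add_mem _ (ih (by omega)) (Submodule.smul_mem _ _ (hgen k (by omega)))
  have hrnP : ∀ w ∈ Pn, r n ⬝ᵥ w = 0 := by
    intro w hw
    obtain ⟨-, -, hDn, -⟩ := phi n le_rfl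
    induction hw using Submodule.span_induction with
    | mem x hx => obtain ⟨i, hi, rfl⟩ := hx; exact hDn i hi
    | zero => exact dotProduct_zero _
    | add x y hx hy ihx ihy => rw [dotProduct_add, ihx, ihy, add_zero]
    | smul a x hx ihx => rw [dotProduct_smul, ihx, smul_zero]
  have hSE0 : S *ᵥ (lam 0 - lamstar) = -(r 0) := by rw [hre 0, neg_neg]
  have hpolyP : ∀ u : Polynomial ℝ, u.natDegree ≤ n → u.coeff 0 = 0 →
      (Polynomial.aeval S u) *ᵥ (lam 0 - lamstar) ∈ Pn := by
    intro u hdeg h0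
    have hlt : u.natDegree < n + 1 := by omega
    rw [Polynomial.as_sum_range' u (n+1) hlt, map_sum, mySumMulVec]
    refine Submodule.sum_mem _ ?_
    intro j hj
    rw [Polynomial.aeval_monomial]
    rcases j with _ | j
    · rw [h0]
      simp only [map_zero, zero_mul, Matrix.zero_mulVec]
      exact Submodule.zero_mem _
    · have hjn : j < n := by
        simp only [Finset.mem_range] at hj; omega
      have hterm : ((algebraMap ℝ (Matrix (Fin m) (Fin m) ℝ)) (u.coeff (j+1)) * S ^ (j+1))
          *ᵥ (lam 0 - lamstar) = u.coeff (j+1) • (-(S ^ j *ᵥ r 0)) := by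
        rw [Algebra.algebraMap_eq_smul_one, smul_mul_assoc, one_mul, Matrix.smul_mulVec]
        congr 1
        rw [pow_succ, ← Matrix.mulVec_mulVec, hSE0, Matrix.mulVec_neg]
      rw [hterm]
      exact Submodule.smul_mem _ _ (Submodule.neg_mem _ (hQP j hjn))
  -- optimality of the CG iterate
  have hSEn : S *ᵥ (lam n - lamstar) = -(r n) := by rw [hre n, neg_neg]
  have hopt : ∀ x : Fin m → ℝ, x - (lam 0 - lamstar) ∈ Pn →
      (lam n - lamstar) ⬝ᵥ S *ᵥ (lam n - lamstar) ≤ x ⬝ᵥ S *ᵥ x := by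
    intro x hx
    have hwPn : x - (lam n - lamstar) ∈ Pn := by
      rw [show x - (lam n - lamstar) = (x - (lam 0 - lamstar)) + -(lam n - lam 0) from by abel]
      exact Submodule.add_mem _ hx (Submodule.neg_mem _ (hlamP n le_rfl))
    have hSw : (lam n - lamstar) ⬝ᵥ S *ᵥ (x - (lam n - lamstar)) = 0 := by
      rw [hsymm, hSEn, dotProduct_neg, dotProduct_comm, hrnP _ hwPn, neg_zero]
    calc (lam n - lamstar) ⬝ᵥ S *ᵥ (lam n - lamstar)
        ≤ (lam n - lamstar) ⬝ᵥ S *ᵥ (lam n - lamstar)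
            + 2 * ((lam n - lamstar) ⬝ᵥ S *ᵥ (x - (lam n - lamstar)))
            + (x - (lam n - lamstar)) ⬝ᵥ S *ᵥ (x - (lam n - lamstar)) := by
          rw [hSw]
          have := hpos (x - (lam n - lamstar))
          linarith
      _ = ((lam n - lamstar) + (x - (lam n - lamstar))) ⬝ᵥ
            S *ᵥ ((lam n - lamstar) + (x - (lam n - lamstar))) := by
          rw [Matrix.mulVec_add, dotProduct_add, add_dotProduct,
            add_dotProduct, hsymm (x - (lam n - lamstar)) (lam n - lamstar)]
          ring
      _ = x ⬝ᵥ S *ᵥ x := by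
          rw [show (lam n - lamstar) + (x - (lam n - lamstar)) = x from by abel]
  -- spectral data
  have hUU : star ((hS.eigenvectorUnitary : Matrix (Fin m) (Fin m) ℝ))
      * (hS.eigenvectorUnitary : Matrix (Fin m) (Fin m) ℝ) = 1 :=
    Matrix.mem_unitaryGroup_iff'.mp hS.eigenvectorUnitary.2
  have hUU' : (hS.eigenvectorUnitary : Matrix (Fin m) (Fin m) ℝ)
      * star ((hS.eigenvectorUnitary : Matrix (Fin m) (Fin m) ℝ)) = 1 :=
    Matrix.mem_unitaryGroup_iff.mp hS.eigenvectorUnitary.2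
  have hspec : S = (hS.eigenvectorUnitary : Matrix (Fin m) (Fin m) ℝ)
      * Matrix.diagonal hS.eigenvalues
      * star ((hS.eigenvectorUnitary : Matrix (Fin m) (Fin m) ℝ)) := by
    have h := hS.spectral_theorem
    simpa using h
  have heig0 : ∀ i, 0 ≤ hS.eigenvalues i := fun i => hpsd.eigenvalues_nonneg i
  have heigb : ∀ i, hS.eigenvalues i ≠ 0 → ωmin ≤ hS.eigenvalues i ∧ hS.eigenvalues i ≤ ωmax :=
    fun i hi => ⟨hmin.2 ⟨hi, i, rfl⟩, hmax.2 ⟨hi, i, rfl⟩⟩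
  -- the Chebyshev candidate polynomial
  obtain ⟨D, hDdeg, hD0, hDb⟩ : ∃ D : Polynomial ℝ, D.natDegree ≤ n ∧ D.eval 0 = 1 ∧
      ∀ ω : ℝ, ωmin ≤ ω → ω ≤ ωmax → (D.eval ω)^2 ≤ 2 * qv ^ n := by
    rcases eq_or_lt_of_le hab with heq | hlt
    · refine ⟨1 - Polynomial.C (ωmin⁻¹) * Polynomial.X, ?_, ?_, ?_⟩
      · refine le_trans (Polynomial.natDegree_sub_le _ _) ?_
        have h1 : (Polynomial.C (ωmin⁻¹) * Polynomial.X : Polynomial ℝ).natDegree ≤ 1 :=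
          le_trans (Polynomial.natDegree_C_mul_le _ _) (by simp)
        simp only [Polynomial.natDegree_one]
        omega
      · simp
      · intro ω h4 h5
        have hω : ω = ωmin := le_antisymm (heq ▸ h5) h4
        have hev : Polynomial.eval ω (1 - Polynomial.C (ωmin⁻¹) * Polynomial.X) = 0 := by
          rw [hω]
          simp [inv_mul_cancel₀ (ne_of_gt ha_pos)]
        rw [hev]
        have := pow_nonneg hqv0 n
        nlinarith
    · -- ωmin < ωmax : Chebyshev polynomial
      have hd : 0 < ωmax - ωmin := by linarith
      set t := Real.sqrt (ωmax / ωmin) with htdef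
      have ht2 : t^2 = ωmax / ωmin := Real.sq_sqrt (by positivity)
      have htgt : 1 < t := by
        nlinarith [ht2, (one_lt_div ha_pos).mpr hlt, ht1]
      set σ := (t+1)/(t-1) with hσdef
      have hσpos : 0 < σ := div_pos (by linarith) (by linarith)
      have hσ1 : 1 < σ := by
        rw [hσdef, lt_div_iff₀ (by linarith)]
        linarith
      have hqσ : qv = σ⁻¹ := by
        rw [hqvdef, hσdef, inv_div]
      have ht1' : t - 1 ≠ 0 := by linarith
      have ht1'' : t + 1 ≠ 0 := by linarith
      have hcstar : (ωmax + ωmin)/(ωmax - ωmin) = (σ + σ⁻¹)/2 := by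
        have e1 : (σ + σ⁻¹)/2 = (t^2+1)/(t^2-1) := by
          rw [hσdef, inv_div]
          have ht2ne : t^2 - 1 ≠ 0 := by nlinarith
          field_simp
          ring
        rw [e1, ht2]
        have h2 : ωmax/ωmin - 1 ≠ 0 := by
          have := (one_lt_div ha_pos).mpr hlt
          intro h; rw [sub_eq_zero] at h; rw [← h] at this; exact lt_irrefl _ this
        field_simp
      set τ := (Polynomial.Chebyshev.T ℝ (n:ℤ)).eval ((ωmax + ωmin)/(ωmax - ωmin)) with hτdef
      have hτval : τ = (σ^n + (σ⁻¹)^n)/2 := by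
        rw [hτdef, hcstar]
        exact cheb_eval_half σ (ne_of_gt hσpos) n
      have hτpos : 0 < τ := by
        rw [hτval]
        positivity
      refine ⟨Polynomial.C τ⁻¹ * (Polynomial.Chebyshev.T ℝ (n:ℤ)).comp
        (Polynomial.C ((ωmax + ωmin)/(ωmax - ωmin)) - Polynomial.C (2/(ωmax - ωmin)) * Polynomial.X),
        ?_, ?_, ?_⟩
      · refine le_trans (Polynomial.natDegree_C_mul_le _ _) ?_
        refine le_trans (Polynomial.natDegree_comp_le) ?_
        have h1 : (Polynomial.C ((ωmax + ωmin)/(ωmax - ωmin))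
            - Polynomial.C (2/(ωmax - ωmin)) * Polynomial.X : Polynomial ℝ).natDegree ≤ 1 := by
          refine le_trans (Polynomial.natDegree_sub_le _ _) ?_
          have h2 : (Polynomial.C (2/(ωmax - ωmin)) * Polynomial.X : Polynomial ℝ).natDegree ≤ 1 :=
            le_trans (Polynomial.natDegree_C_mul_le _ _) (by simp)
          simp only [Polynomial.natDegree_C]
          omega
        calc (Polynomial.Chebyshev.T ℝ (n:ℤ)).natDegree *
              (Polynomial.C ((ωmax + ωmin)/(ωmax - ωmin))
                - Polynomial.C (2/(ωmax - ωmin)) * Polynomial.X).natDegree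
            ≤ n * 1 := Nat.mul_le_mul (cheb_natDegree_le n) h1
          _ = n := by omega
      · simp only [Polynomial.eval_mul, Polynomial.eval_C, Polynomial.eval_comp,
          Polynomial.eval_sub, Polynomial.eval_X, mul_zero, sub_zero]
        rw [← hτdef]
        exact inv_mul_cancel₀ (ne_of_gt hτpos)
      · intro ω h4 h5
        have hy : |(ωmax + ωmin)/(ωmax - ωmin) - 2/(ωmax - ωmin) * ω| ≤ 1 := by
          rw [show (ωmax + ωmin)/(ωmax - ωmin) - 2/(ωmax - ωmin) * ω
            = (ωmax + ωmin - 2*ω)/(ωmax - ωmin) from by ring]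
          rw [abs_div, abs_of_pos hd, div_le_one hd]
          rw [abs_le]
          constructor <;> nlinarith
        have hT := cheb_abs_le _ hy n
        have hev : Polynomial.eval ω (Polynomial.C τ⁻¹ * (Polynomial.Chebyshev.T ℝ (n:ℤ)).comp
            (Polynomial.C ((ωmax + ωmin)/(ωmax - ωmin)) - Polynomial.C (2/(ωmax - ωmin)) * Polynomial.X))
            = τ⁻¹ * (Polynomial.Chebyshev.T ℝ (n:ℤ)).eval
              ((ωmax + ωmin)/(ωmax - ωmin) - 2/(ωmax - ωmin) * ω) := by
          simp [Polynomial.eval_mul, Polynomial.eval_comp]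
        rw [hev]
        have hτinv : τ⁻¹ = 2/(σ^n + (σ⁻¹)^n) := by
          rw [hτval, inv_div]
        have hden : 0 < σ^n + (σ⁻¹)^n := by positivity
        have hkey : 4 ≤ 2 * qv^n * (σ^n + (σ⁻¹)^n)^2 := by
          have hqn : qv^n = (σ^n)⁻¹ := by rw [hqσ, inv_pow]
          rw [hqn]
          have hs1 : 1 ≤ σ^n := one_le_pow₀ (le_of_lt hσ1)
          have hs0 : 0 < σ^n := by positivity
          have hz : σ^n * (σ^n)⁻¹ = 1 := mul_inv_cancel₀ (ne_of_gt hs0)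
          have hinvpow : (σ⁻¹)^n = (σ^n)⁻¹ := by rw [inv_pow]
          rw [hinvpow]
          nlinarith [sq_nonneg (σ^n - 1), sq_nonneg ((σ^n)⁻¹), hz, hs1, hs0,
            inv_pos.mpr hs0, sq_nonneg (σ^n - (σ^n)⁻¹)]
        have hbnd : (τ⁻¹)^2 ≤ 2 * qv^n := by
          rw [hτinv, div_pow]
          rw [div_le_iff₀ (by positivity)]
          nlinarith [hkey]
        set y := (ωmax + ωmin)/(ωmax - ωmin) - 2/(ωmax - ωmin) * ω with hydef
        have hT2 : ((Polynomial.Chebyshev.T ℝ (n:ℤ)).eval y)^2 ≤ 1 := by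
          have habs : |((Polynomial.Chebyshev.T ℝ (n:ℤ)).eval y)| ≤ 1 := hT
          nlinarith [abs_nonneg ((Polynomial.Chebyshev.T ℝ (n:ℤ)).eval y),
            sq_abs ((Polynomial.Chebyshev.T ℝ (n:ℤ)).eval y)]
        calc (τ⁻¹ * (Polynomial.Chebyshev.T ℝ (n:ℤ)).eval y)^2
            = (τ⁻¹)^2 * ((Polynomial.Chebyshev.T ℝ (n:ℤ)).eval y)^2 := by ring
          _ ≤ (τ⁻¹)^2 * 1 := by
              have : 0 ≤ (τ⁻¹)^2 := sq_nonneg _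
              nlinarith
          _ ≤ 2 * qv^n := by rw [mul_one]; exact hbnd
  -- assemble
  have hx1 : (Polynomial.aeval S D) *ᵥ (lam 0 - lamstar) - (lam 0 - lamstar) ∈ Pn := by
    have h1 : (Polynomial.aeval S D) *ᵥ (lam 0 - lamstar) - (lam 0 - lamstar)
        = (Polynomial.aeval S (D - 1)) *ᵥ (lam 0 - lamstar) := by
      rw [map_sub, _root_.map_one, Matrix.sub_mulVec, Matrix.one_mulVec]
    rw [h1]
    refine hpolyP (D - 1) ?_ ?_
    · refine le_trans (Polynomial.natDegree_sub_le _ _) ?_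
      simp only [Polynomial.natDegree_one]
      omega
    · rw [Polynomial.coeff_sub, Polynomial.coeff_one_zero,
        Polynomial.coeff_zero_eq_eval_zero, hD0, sub_self]
  have h2 := hopt _ hx1
  have h3 : ((Polynomial.aeval S D) *ᵥ (lam 0 - lamstar)) ⬝ᵥ
      S *ᵥ ((Polynomial.aeval S D) *ᵥ (lam 0 - lamstar))
      ≤ (2 * qv ^ n) * ((lam 0 - lamstar) ⬝ᵥ S *ᵥ (lam 0 - lamstar)) := by
    refine mySpecBound S _ _ hUU hUU' hspec D _ _ ?_
    intro i
    by_cases hz : hS.eigenvalues i = 0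
    · rw [hz]; simp
    · obtain ⟨h4, h5⟩ := heigb i hz
      have h6 := hDb _ h4 h5
      have h7 : 0 < hS.eigenvalues i := lt_of_le_of_ne (heig0 i) (Ne.symm hz)
      nlinarith
  calc (lam n - lamstar) ⬝ᵥ S *ᵥ (lam n - lamstar)
      ≤ ((Polynomial.aeval S D) *ᵥ (lam 0 - lamstar)) ⬝ᵥ
          S *ᵥ ((Polynomial.aeval S D) *ᵥ (lam 0 - lamstar)) := h2
    _ ≤ 2 * qv ^ n * ((lam 0 - lamstar) ⬝ᵥ S *ᵥ (lam 0 - lamstar)) := by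
        linarith [h3]
end
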